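/- Fix T > 0 and let G : [0,T] → [0,∞) be continuous, ε₁ : Δ_T → [0,∞) be superadditive (a control), ε₂ : Δ_T → R be superadditive, and κ > 0. Suppose for all 0 ≤ s ≤ t ≤ T: G_t − G_s ≤ (sup_{r∈[s,t]} G_r) ε₁(s,t)^{1/κ} + ε₂(s,t). Then there is a constant C_κ > 0 depending only on κ such that sup_{t≤T} G_t ≤ 2 exp(max{1, C_κ ε₁(0,T)}) [G_0 + sup_{t≤T} |ε₂(0,t)|]. -/

import Mathlib

open Set Filter Topology

set_option maxHeartbeats 1000000

/-- Rough Grönwall lemma: if `G_t − G_s ≤ (sup_{[s,t]} G) ε₁(s,t)^{1/κ} + ε₂(s,t)` for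
superadditive `ε₁ ≥ 0` (a control) and superadditive `ε₂`, then
`sup_{t ≤ T} G_t ≤ 2 exp(max{1, C_κ ε₁(0,T)}) [G_0 + sup_{t ≤ T}|ε₂(0,t)|]`. -/
theorem rough_gronwall (κ : ℝ) (hκ : 0 < κ) :
    ∃ C > (0:ℝ), ∀ (T : ℝ), 0 < T → ∀ (G : ℝ → ℝ) (ε₁ ε₂ : ℝ → ℝ → ℝ),
      ContinuousOn G (Set.Icc 0 T) →
      (∀ t ∈ Set.Icc (0:ℝ) T, 0 ≤ G t) →
      (∀ s t : ℝ, 0 ≤ s → s ≤ t → t ≤ T → 0 ≤ ε₁ s t) →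
      (∀ s r t : ℝ, 0 ≤ s → s ≤ r → r ≤ t → t ≤ T → ε₁ s r + ε₁ r t ≤ ε₁ s t) →
      (∀ s r t : ℝ, 0 ≤ s → s ≤ r → r ≤ t → t ≤ T → ε₂ s r + ε₂ r t ≤ ε₂ s t) →
      (∀ s t : ℝ, 0 ≤ s → s ≤ t → t ≤ T →
        G t - G s ≤ (sSup (G '' Set.Icc s t)) * (ε₁ s t) ^ (1/κ) + ε₂ s t) →
      ∀ t ∈ Set.Icc (0:ℝ) T,
        G t ≤ 2 * Real.exp (max 1 (C * ε₁ 0 T)) *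
          (G 0 + sSup ((fun r => |ε₂ 0 r|) '' Set.Icc 0 T)) := by
  have h2 : (0:ℝ) ≤ 2 := by norm_num
  have hlog2 : 0 < Real.log 2 := Real.log_pos (by norm_num)
  have hrκ : (0:ℝ) < (2:ℝ) ^ κ := Real.rpow_pos_of_pos (by norm_num) κ
  refine ⟨3 * Real.log 2 * (2:ℝ) ^ κ, by positivity, ?_⟩
  intro T hT G ε₁ ε₂ hGc hGnn hε₁nn hε₁s hε₂s hyp t htT
  set C : ℝ := 3 * Real.log 2 * (2:ℝ) ^ κ with hCdef
  set α : ℝ := (2:ℝ) ^ (-κ) with hαdef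
  have hαpos : 0 < α := Real.rpow_pos_of_pos (by norm_num) _
  have hhalfα : α ^ (1/κ) = 1/2 := by
    rw [hαdef, ← Real.rpow_mul h2]
    have hm : -κ * (1/κ) = -1 := by field_simp
    rw [hm, Real.rpow_neg_one]
    norm_num
  -- monotonicity of ε₁ in both arguments
  have hε₁mono : ∀ s t t', 0 ≤ s → s ≤ t → t ≤ t' → t' ≤ T → ε₁ s t ≤ ε₁ s t' := by
    intro s t t' hs hst htt' ht'
    have := hε₁s s t t' hs hst htt' ht'
    have := hε₁nn t t' (hs.trans hst) htt' ht'
    linarith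
  have hε₁mono' : ∀ s' s t, 0 ≤ s' → s' ≤ s → s ≤ t → t ≤ T → ε₁ s t ≤ ε₁ s' t := by
    intro s' s t hs' hss hst ht
    have := hε₁s s' s t hs' hss hst ht
    have := hε₁nn s' s hs' hss ((hst).trans ht)
    linarith
  -- global max of G on [0,T]
  obtain ⟨tM, htM, hmaxT⟩ := isCompact_Icc.exists_isMaxOn (Set.nonempty_Icc.mpr hT.le) hGc
  set M : ℝ := G tM with hMdef
  have hM : ∀ y ∈ Icc (0:ℝ) T, G y ≤ M := fun y hy => hmaxT hy
  have hMnn : 0 ≤ M := hGnn tM htM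
  have hsSup_le : ∀ s u, 0 ≤ s → s ≤ u → u ≤ T → sSup (G '' Icc s u) ≤ M := by
    intro s u hs hsu hu
    apply csSup_le ((Set.nonempty_Icc.mpr hsu).image G)
    rintro x ⟨y, hy, rfl⟩
    exact hM y ⟨hs.trans hy.1, hy.2.trans hu⟩
  -- lower bound on ε₂ from the hypothesis
  have hε₂lb : ∀ s u, 0 ≤ s → s ≤ u → u ≤ T → -(M * (ε₁ 0 T) ^ (1/κ) + M) ≤ ε₂ s u := by
    intro s u hs hsu hu
    have h1 := hyp s u hs hsu hu
    have hss := hsSup_le s u hs hsu hu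
    have hεle : ε₁ s u ≤ ε₁ 0 T :=
      le_trans (hε₁mono s u T hs hsu hu le_rfl) (hε₁mono' 0 s T le_rfl hs (hsu.trans hu) le_rfl)
    have hrp : (ε₁ s u) ^ (1/κ) ≤ (ε₁ 0 T) ^ (1/κ) :=
      Real.rpow_le_rpow (hε₁nn s u hs hsu hu) hεle (by positivity)
    have hmm : sSup (G '' Icc s u) * (ε₁ s u) ^ (1/κ) ≤ M * (ε₁ 0 T) ^ (1/κ) :=
      mul_le_mul hss hrp (Real.rpow_nonneg (hε₁nn s u hs hsu hu) _) hMnn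
    have hGs := hM s ⟨hs, hsu.trans hu⟩
    have hGu := hGnn u ⟨hs.trans hsu, hu⟩
    linarith
  -- the sup of |ε₂ 0 ·| is a genuine bound
  set E : ℝ := sSup ((fun r => |ε₂ 0 r|) '' Icc 0 T) with hEdef
  have hEbdd : BddAbove ((fun r => |ε₂ 0 r|) '' Icc 0 T) := by
    refine ⟨|ε₂ 0 T| + (M * (ε₁ 0 T) ^ (1/κ) + M), ?_⟩
    rintro x ⟨r, hr, rfl⟩
    have h1 := hε₂lb 0 r le_rfl hr.1 hr.2
    have h2' := hε₂lb r T hr.1 hr.2 le_rfl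
    have h3 := hε₂s 0 r T le_rfl hr.1 hr.2 le_rfl
    have h4 := le_abs_self (ε₂ 0 T)
    have h5 := abs_nonneg (ε₂ 0 T)
    rw [abs_le]
    constructor <;> linarith
  have hEub : ∀ r, 0 ≤ r → r ≤ T → |ε₂ 0 r| ≤ E :=
    fun r h1 h2' => le_csSup hEbdd ⟨r, ⟨h1, h2'⟩, rfl⟩
  have hEnn : 0 ≤ E := le_trans (abs_nonneg _) (hEub 0 le_rfl hT.le)
  have hε₂ub : ∀ s u, 0 ≤ s → s ≤ u → u ≤ T → ε₂ s u ≤ 2 * E := by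
    intro s u hs hsu hu
    have h := hε₂s 0 s u le_rfl hs hsu hu
    have h1 := abs_le.mp (hEub s hs (hsu.trans hu))
    have h2' := abs_le.mp (hEub u (hs.trans hsu) hu)
    linarith
  -- key doubling estimate on intervals with small control
  have hkey : ∀ s u, 0 ≤ s → s ≤ u → u ≤ T → ε₁ s u ≤ α →
      sSup (G '' Icc s u) ≤ G u → G u ≤ 2 * G s + 4 * E := by
    intro s u hs hsu hu hε hss
    have h1 := hyp s u hs hsu hu
    have hrp : (ε₁ s u) ^ (1/κ) ≤ 1/2 := by
      rw [← hhalfα]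
      exact Real.rpow_le_rpow (hε₁nn s u hs hsu hu) hε (by positivity)
    have hGu : 0 ≤ G u := hGnn u ⟨hs.trans hsu, hu⟩
    have hmm : sSup (G '' Icc s u) * (ε₁ s u) ^ (1/κ) ≤ G u * (1/2) :=
      mul_le_mul hss hrp (Real.rpow_nonneg (hε₁nn s u hs hsu hu) _) hGu
    have h2' := hε₂ub s u hs hsu hu
    linarith
  -- main induction on the number of α-quanta of control
  have main : ∀ k : ℕ, ∀ u, 0 ≤ u → u ≤ T → ε₁ 0 u < k * α →
      ∀ x, 0 ≤ x → x ≤ u → G x ≤ 2^k * G 0 + (4 * 2^k - 4) * E := by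
    intro k
    induction k with
    | zero =>
      intro u hu0 huT hlt
      have := hε₁nn 0 u le_rfl hu0 huT
      norm_num at hlt
      linarith
    | succ k ih =>
      intro u hu0 huT hlt x hx0 hxu
      have huT' : Icc (0:ℝ) u ⊆ Icc 0 T := Icc_subset_Icc le_rfl huT
      obtain ⟨w, hw, hmax'⟩ :=
        isCompact_Icc.exists_isMaxOn (Set.nonempty_Icc.mpr hu0) (hGc.mono huT')
      have hmaxu : ∀ y ∈ Icc (0:ℝ) u, G y ≤ G w := fun y hy => hmax' hy
      have hw0 : 0 ≤ w := hw.1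
      have hwu : w ≤ u := hw.2
      have hwT : w ≤ T := hwu.trans huT
      refine le_trans (hmaxu x ⟨hx0, hxu⟩) ?_
      set S : Set ℝ := {s | s ∈ Icc 0 w ∧ ε₁ s w ≤ α} with hS
      have hwS : w ∈ S := by
        refine ⟨⟨hw0, le_rfl⟩, ?_⟩
        have h1 := hε₁s w w w hw0 le_rfl le_rfl hwT
        have h2' := hε₁nn w w hw0 le_rfl hwT
        linarith
      have hSne : S.Nonempty := ⟨w, hwS⟩
      have hSbdd : BddBelow S := ⟨0, fun s hs => hs.1.1⟩
      set σ := sInf S with hσdef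
      have hσ0 : 0 ≤ σ := le_csInf hSne fun s hs => hs.1.1
      have hσw : σ ≤ w := csInf_le hSbdd hwS
      have hσT : σ ≤ T := hσw.trans hwT
      have hA : ∀ s, σ < s → s ≤ w → ε₁ s w ≤ α := by
        intro s hσs hsw
        obtain ⟨s₀, hs₀S, hs₀⟩ := exists_lt_of_csInf_lt hSne hσs
        have h1 := hε₁mono' s₀ s w hs₀S.1.1 hs₀.le hsw hwT
        linarith [hs₀S.2]
      have hssw : ∀ s, 0 ≤ s → s ≤ w → sSup (G '' Icc s w) ≤ G w := by
        intro s hs hsw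
        apply csSup_le ((Set.nonempty_Icc.mpr hsw).image G)
        rintro x' ⟨y, hy, rfl⟩
        exact hmaxu y ⟨hs.trans hy.1, hy.2.trans hwu⟩
      -- G w ≤ 2 G σ + 4 E
      have hB : G w ≤ 2 * G σ + 4 * E := by
        rcases eq_or_lt_of_le hσw with heq | hlt'
        · have := hGnn w ⟨hw0, hwT⟩
          rw [heq]
          linarith
        · have htend : Tendsto G (𝓝[Ioc σ w] σ) (𝓝 (G σ)) := by
            have hct : ContinuousWithinAt G (Icc 0 T) σ :=
              hGc.continuousWithinAt ⟨hσ0, hσT⟩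
            exact hct.mono_left
              (nhdsWithin_mono σ (fun y hy => ⟨hσ0.trans hy.1.le, hy.2.trans hwT⟩))
          have hne : (𝓝[Ioc σ w] σ).NeBot := by
            rw [nhdsWithin_Ioc_eq_nhdsGT hlt']
            exact nhdsGT_neBot σ
          have hev : ∀ᶠ s in 𝓝[Ioc σ w] σ, (G w - 4 * E) / 2 ≤ G s := by
            filter_upwards [eventually_mem_nhdsWithin] with s hs
            have h := hkey s w (hσ0.trans hs.1.le) hs.2 hwT (hA s hs.1 hs.2)
              (hssw s (hσ0.trans hs.1.le) hs.2)
            linarith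
          have := ge_of_tendsto htend hev
          linarith
      rcases eq_or_lt_of_le hσ0 with heq0 | hσpos
      · -- σ = 0
        have h0 : G w ≤ 2 * G 0 + 4 * E := by rw [← heq0] at hB; exact hB
        have hG0 : 0 ≤ G 0 := hGnn 0 ⟨le_rfl, hT.le⟩
        have h2k : (2:ℝ) ≤ 2^(k+1) := by
          calc (2:ℝ) = 2^1 := (pow_one 2).symm
          _ ≤ 2^(k+1) := pow_le_pow_right₀ (by norm_num) (by omega)
        have e1 : (0:ℝ) ≤ (2^(k+1) - 2) * G 0 := mul_nonneg (by linarith) hG0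
        have e2 : (0:ℝ) ≤ (4 * 2^(k+1) - 8) * E := mul_nonneg (by linarith) hEnn
        nlinarith
      · -- σ > 0
        have hIH : ∀ s, 0 ≤ s → s < σ → G s ≤ 2^k * G 0 + (4 * 2^k - 4) * E := by
          intro s hs0 hsσ
          have hsw : s < w := hsσ.trans_le hσw
          have hnot : α < ε₁ s w := by
            by_contra hcon
            push_neg at hcon
            exact absurd (csInf_le hSbdd ⟨⟨hs0, hsw.le⟩, hcon⟩) (not_le.mpr hsσ)
          have hmon : ε₁ 0 s + ε₁ s w ≤ ε₁ 0 w := hε₁s 0 s w le_rfl hs0 hsw.le hwT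
          have hmon2 : ε₁ 0 w ≤ ε₁ 0 u := hε₁mono 0 w u le_rfl hw0 hwu huT
          have hlt2 : ε₁ 0 s < k * α := by
            push_cast at hlt ⊢
            linarith
          exact ih s hs0 (hsw.le.trans (hwu.trans huT)) hlt2 s hs0 le_rfl
        have hGσ : G σ ≤ 2^k * G 0 + (4 * 2^k - 4) * E := by
          have htend : Tendsto G (𝓝[Ico 0 σ] σ) (𝓝 (G σ)) := by
            have hct : ContinuousWithinAt G (Icc 0 T) σ :=
              hGc.continuousWithinAt ⟨hσ0, hσT⟩
            exact hct.mono_left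
              (nhdsWithin_mono σ (fun y hy => ⟨hy.1, hy.2.le.trans hσT⟩))
          have hne : (𝓝[Ico 0 σ] σ).NeBot := by
            rw [nhdsWithin_Ico_eq_nhdsLT hσpos]
            exact nhdsLT_neBot σ
          refine le_of_tendsto htend ?_
          filter_upwards [eventually_mem_nhdsWithin] with s hs
          exact hIH s hs.1 hs.2
        have e1 : (2:ℝ)^(k+1) = 2 * 2^k := by ring
        have e2 : 2 * G σ ≤ 2 * (2^k * G 0 + (4 * 2^k - 4) * E) :=
          mul_le_mul_of_nonneg_left hGσ (by norm_num)
        rw [e1]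
        linarith
  -- choose k and conclude
  set L : ℝ := ε₁ 0 T with hLdef
  have hLnn : 0 ≤ L := hε₁nn 0 T le_rfl hT.le le_rfl
  obtain ⟨k, hk1, hkα, hk2⟩ :
      ∃ k : ℕ, 1 ≤ k ∧ L < k * α ∧ (2 ≤ k → ((k:ℝ) - 1) * α ≤ L) := by
    refine ⟨Nat.floor (L / α) + 1, le_add_self.trans le_rfl, ?_, ?_⟩
    · have h1 : L / α < ((Nat.floor (L / α) + 1 : ℕ) : ℝ) := by
        push_cast
        exact Nat.lt_floor_add_one _
      calc L = (L / α) * α := by field_simp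
      _ < ((Nat.floor (L / α) + 1 : ℕ) : ℝ) * α := mul_lt_mul_of_pos_right h1 hαpos
    · intro hk2'
      have h1 : ((Nat.floor (L / α) : ℕ) : ℝ) ≤ L / α := Nat.floor_le (by positivity)
      have h2' : (((Nat.floor (L / α) + 1 : ℕ) : ℝ) - 1) = ((Nat.floor (L / α) : ℕ) : ℝ) := by
        push_cast; ring
      rw [h2']
      calc ((Nat.floor (L / α) : ℕ) : ℝ) * α ≤ (L / α) * α :=
            mul_le_mul_of_nonneg_right h1 hαpos.le
      _ = L := by field_simp
  have hmain := main k T hT.le le_rfl hkα t htT.1 htT.2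
  set m : ℝ := max 1 (C * L) with hmdef
  have hm1 : (1:ℝ) ≤ m := le_max_left _ _
  have hexp2 : (2:ℝ) ≤ Real.exp m := by
    have h1 := Real.add_one_le_exp (1:ℝ)
    have h2' : Real.exp 1 ≤ Real.exp m := Real.exp_le_exp.mpr hm1
    linarith
  have hcoef : (2:ℝ)^k ≤ 2 * Real.exp m ∧ 4 * (2:ℝ)^k - 4 ≤ 2 * Real.exp m := by
    rcases Nat.lt_or_ge k 2 with hklt | hk2'
    · have hk1' : k = 1 := by omega
      subst hk1'
      norm_num
      constructor <;> linarith
    · have hfl1 : ((k:ℝ) - 1) * α ≤ L := hk2 hk2'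
      have hκα : (2:ℝ)^κ * α = 1 := by
        rw [hαdef, ← Real.rpow_add (by norm_num : (0:ℝ) < 2)]
        simp
      have hCL : 3 * Real.log 2 * ((k:ℝ) - 1) ≤ C * L := by
        calc 3 * Real.log 2 * ((k:ℝ) - 1)
            = 3 * Real.log 2 * (((k:ℝ) - 1) * ((2:ℝ)^κ * α)) := by rw [hκα]; ring
          _ = C * (((k:ℝ) - 1) * α) := by rw [hCdef]; ring
          _ ≤ C * L := by
              apply mul_le_mul_of_nonneg_left hfl1
              positivity
      have hexp : (2:ℝ)^(3*(k-1)) ≤ Real.exp m := by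
        have hcast : ((3*(k-1) : ℕ) : ℝ) = 3 * ((k:ℝ) - 1) := by
          push_cast [Nat.cast_sub (by omega : 1 ≤ k)]
          ring
        have h1 : ((3*(k-1) : ℕ) : ℝ) * Real.log 2 ≤ m := by
          refine le_trans ?_ (le_max_right _ _)
          rw [hcast]
          calc (3:ℝ) * ((k:ℝ) - 1) * Real.log 2 = 3 * Real.log 2 * ((k:ℝ) - 1) := by ring
          _ ≤ C * L := hCL
        calc (2:ℝ)^(3*(k-1)) = Real.exp (Real.log 2) ^ (3*(k-1)) := by
              rw [Real.exp_log (by norm_num : (0:ℝ) < 2)]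
          _ = Real.exp (((3*(k-1):ℕ):ℝ) * Real.log 2) := (Real.exp_nat_mul _ _).symm
          _ ≤ Real.exp m := Real.exp_le_exp.mpr h1
      have hpow : (4:ℝ) * 2^k ≤ 2 * 2^(3*(k-1)) := by
        have h1 : (4:ℝ) * 2^k = 2^(k+2) := by rw [pow_add]; ring
        have h2' : (2:ℝ) * 2^(3*(k-1)) = 2^(3*(k-1)+1) := by rw [pow_succ]; ring
        rw [h1, h2']
        exact pow_le_pow_right₀ (by norm_num) (by omega)
      have hpk : (0:ℝ) ≤ 2^k := by positivity
      constructor <;> linarith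
  have hG0 : 0 ≤ G 0 := hGnn 0 ⟨le_rfl, hT.le⟩
  have hb1 : (2:ℝ)^k * G 0 ≤ 2 * Real.exp m * G 0 :=
    mul_le_mul_of_nonneg_right hcoef.1 hG0
  have hb2 : (4 * (2:ℝ)^k - 4) * E ≤ 2 * Real.exp m * E :=
    mul_le_mul_of_nonneg_right hcoef.2 hEnn
  calc G t ≤ 2^k * G 0 + (4 * 2^k - 4) * E := hmain
  _ ≤ 2 * Real.exp m * G 0 + 2 * Real.exp m * E := by linarith
  _ = 2 * Real.exp m * (G 0 + E) := by ring
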